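/- arXiv:1206.3817 — 4 statements merged into one kernel-verified Lean document; each statement's English description precedes it below -/
import Mathlib

section
/- Uniqueness of solutions to the extended Skorokhod problem in a time-dependent interval: Let l, r : [0,∞) → [-∞,∞) and (-∞,∞] respectively be càdlàg with l(t) ≤ r(t) for all t, and let ψ : [0,∞) → ℝ be càdlàg. If (φ₁, η₁) and (φ₂, η₂) both satisfy: (i) φ(t) = ψ(t) + η(t) ∈ [l(t), r(t)] for all t; (ii) η is nondecreasing on intervals (s,t] where φ < r throughout, and nonincreasing on intervals where φ > l throughout; (iii) η(t) - η(t-) ≥ 0 if φ(t) < r(t), and η(t) - η(t-) ≤ 0 if φ(t) > l(t) (with η(0-) := 0), then φ₁ = φ₂ and η₁ = η₂. -/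
open Filter Set

/-- `f : ℝ → ℝ` is càdlàg on `[0,∞)`: right-continuous everywhere on `[0,∞)` and
with left limits at every `t > 0`. -/
def Cadlag (f : ℝ → ℝ) : Prop :=
  (∀ t : ℝ, 0 ≤ t → ContinuousWithinAt f (Ici t) t) ∧
  (∀ t : ℝ, 0 < t → ∃ L : ℝ, Tendsto f (nhdsWithin t (Iio t)) (nhds L))

/-- `(φ, η)` solves the extended Skorokhod problem in the time-dependent interval
`[l(t), r(t)]` for the input `ψ`, in the sense of Burdzy–Kang–Ramanan:
(i) `φ = ψ + η ∈ [l, r]`; (ii) `η` is nondecreasing on intervals `(s,t]` where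
`φ < r` throughout, nonincreasing on intervals where `φ > l` throughout;
(iii) the jump `η(t) - η(t-)` is `≥ 0` if `φ(t) < r(t)` and `≤ 0` if `φ(t) > l(t)`,
with the convention `η(0-) = 0`. -/
def SolvesESP (l r : ℝ → EReal) (ψ φ η : ℝ → ℝ) : Prop :=
  (∀ t : ℝ, 0 ≤ t →
      φ t = ψ t + η t ∧ l t ≤ (φ t : EReal) ∧ (φ t : EReal) ≤ r t) ∧
  (∀ s t : ℝ, 0 ≤ s → s ≤ t →
      (∀ u : ℝ, s < u → u ≤ t → (φ u : EReal) < r u) → η s ≤ η t) ∧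
  (∀ s t : ℝ, 0 ≤ s → s ≤ t →
      (∀ u : ℝ, s < u → u ≤ t → l u < (φ u : EReal)) → η t ≤ η s) ∧
  (((φ 0 : EReal) < r 0 → 0 ≤ η 0) ∧ (l 0 < (φ 0 : EReal) → η 0 ≤ 0)) ∧
  (∀ t : ℝ, 0 < t → ∀ L : ℝ, Tendsto η (nhdsWithin t (Iio t)) (nhds L) →
      ((φ t : EReal) < r t → L ≤ η t) ∧ (l t < (φ t : EReal) → η t ≤ L))

/-- One-sided comparison: `η₁ ≤ η₂` on `[0,∞)`. -/
lemma esp_aux (l r : ℝ → EReal) (ψ φ₁ η₁ φ₂ η₂ : ℝ → ℝ)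
    (hη₁ : ∀ t : ℝ, 0 < t → ∃ L : ℝ, Tendsto η₁ (nhdsWithin t (Iio t)) (nhds L))
    (hη₂ : ∀ t : ℝ, 0 < t → ∃ L : ℝ, Tendsto η₂ (nhdsWithin t (Iio t)) (nhds L))
    (h1 : SolvesESP l r ψ φ₁ η₁) (h2 : SolvesESP l r ψ φ₂ η₂) :
    ∀ t : ℝ, 0 ≤ t → η₁ t - η₂ t ≤ 0 := by
  obtain ⟨h1a, h1b, h1c, ⟨h1d1, h1d2⟩, h1e⟩ := h1
  obtain ⟨h2a, h2b, h2c, ⟨h2d1, h2d2⟩, h2e⟩ := h2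
  -- pointwise consequences of positivity of θ = η₁ - η₂
  have hpt : ∀ s : ℝ, 0 ≤ s → η₂ s < η₁ s →
      l s < (φ₁ s : EReal) ∧ (φ₂ s : EReal) < r s := by
    intro s hs hlt
    obtain ⟨he1, hl1, hr1⟩ := h1a s hs
    obtain ⟨he2, hl2, hr2⟩ := h2a s hs
    have hφ : φ₂ s < φ₁ s := by rw [he1, he2]; linarith
    have hφ' : (φ₂ s : EReal) < (φ₁ s : EReal) := EReal.coe_lt_coe_iff.mpr hφ
    exact ⟨lt_of_le_of_lt hl2 hφ', lt_of_lt_of_le hφ' hr1⟩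
  -- value at 0
  have h0 : η₁ 0 - η₂ 0 ≤ 0 := by
    by_contra h0'
    push_neg at h0'
    obtain ⟨hl0, hr0⟩ := hpt 0 le_rfl (by linarith)
    have := h1d2 hl0
    have := h2d1 hr0
    linarith
  intro t ht
  by_contra hcon
  push_neg at hcon
  have htpos : 0 < t := by
    rcases ht.eq_or_lt with h | h
    · exfalso; rw [← h] at hcon; linarith
    · exact h
  set ε : ℝ := (η₁ t - η₂ t) / 2 with hεdef
  have hε : 0 < ε := by simp only [hεdef]; linarith
  set S : Set ℝ := {s : ℝ | 0 ≤ s ∧ s ≤ t ∧ η₁ s - η₂ s ≤ ε} with hSdef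
  have h0S : (0 : ℝ) ∈ S := ⟨le_rfl, htpos.le, by linarith⟩
  have hSne : S.Nonempty := ⟨0, h0S⟩
  have hbdd : BddAbove S := ⟨t, fun s hs => hs.2.1⟩
  set σ : ℝ := sSup S with hσdef
  have hσ0 : 0 ≤ σ := le_csSup hbdd h0S
  have hσt : σ ≤ t := csSup_le hSne fun s hs => hs.2.1
  have habove : ∀ u : ℝ, σ < u → u ≤ t → ε < η₁ u - η₂ u := by
    intro u hu1 hu2
    by_contra hcu
    push_neg at hcu
    have huS : u ∈ S := ⟨le_trans hσ0 hu1.le, hu2, hcu⟩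
    exact absurd (le_csSup hbdd huS) (not_le.mpr hu1)
  by_cases hσS : η₁ σ - η₂ σ ≤ ε
  · -- θ stays above ε on (σ, t], so η₁ decreases and η₂ increases there
    have hσlt : σ ≤ t := hσt
    have hmono1 : η₁ t ≤ η₁ σ :=
      h1c σ t hσ0 hσlt fun u hu1 hu2 =>
        (hpt u (le_trans hσ0 hu1.le) (by linarith [habove u hu1 hu2])).1
    have hmono2 : η₂ σ ≤ η₂ t :=
      h2b σ t hσ0 hσlt fun u hu1 hu2 =>
        (hpt u (le_trans hσ0 hu1.le) (by linarith [habove u hu1 hu2])).2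
    have : η₁ t - η₂ t ≤ η₁ σ - η₂ σ := by linarith
    simp only [hεdef] at hσS
    linarith
  · push_neg at hσS
    have hσpos : 0 < σ := by
      rcases hσ0.eq_or_lt with h | h
      · exfalso; rw [← h] at hσS; linarith
      · exact h
    obtain ⟨L₁, hL₁⟩ := hη₁ σ hσpos
    obtain ⟨L₂, hL₂⟩ := hη₂ σ hσpos
    have hLt : Tendsto (fun s => η₁ s - η₂ s) (nhdsWithin σ (Iio σ)) (nhds (L₁ - L₂)) :=
      hL₁.sub hL₂
    have hσnS : σ ∉ S := fun h => absurd h.2.2 (not_le.mpr hσS)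
    have hfreq : ∃ᶠ s in nhdsWithin σ (Iio σ), η₁ s - η₂ s ≤ ε := by
      rw [Filter.frequently_iff]
      intro U hU
      rw [mem_nhdsLT_iff_exists_Ioo_subset] at hU
      obtain ⟨a, ha, hsub⟩ := hU
      obtain ⟨s, hsS, hs⟩ := exists_lt_of_lt_csSup hSne ha
      have hsσ : s < σ :=
        lt_of_le_of_ne (le_csSup hbdd hsS) fun h => hσnS (h ▸ hsS)
      exact ⟨s, hsub ⟨hs, hsσ⟩, hsS.2.2⟩
    have hLε : L₁ - L₂ ≤ ε := by
      by_contra hc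
      push_neg at hc
      have hev : ∀ᶠ s in nhdsWithin σ (Iio σ), ε < η₁ s - η₂ s :=
        hLt.eventually (eventually_gt_nhds hc)
      obtain ⟨s, hs1, hs2⟩ := (hfreq.and_eventually hev).exists
      linarith
    obtain ⟨hlσ, hrσ⟩ := hpt σ hσ0 (by linarith)
    have hj1 : η₁ σ ≤ L₁ := (h1e σ hσpos L₁ hL₁).2 hlσ
    have hj2 : L₂ ≤ η₂ σ := (h2e σ hσpos L₂ hL₂).1 hrσ
    linarith

/-- Uniqueness of solutions of the extended Skorokhod problem in a time-dependent
interval `[l(t), r(t)]` for a càdlàg input `ψ`. -/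
theorem esp_uniqueness
    (l r : ℝ → EReal)
    (hl_ne : ∀ t : ℝ, l t ≠ ⊤) (hr_ne : ∀ t : ℝ, r t ≠ ⊥)
    (hlr : ∀ t : ℝ, 0 ≤ t → l t ≤ r t)
    (hl_rc : ∀ t : ℝ, 0 ≤ t → ContinuousWithinAt l (Ici t) t)
    (hr_rc : ∀ t : ℝ, 0 ≤ t → ContinuousWithinAt r (Ici t) t)
    (hl_ll : ∀ t : ℝ, 0 < t → ∃ L : EReal, Tendsto l (nhdsWithin t (Iio t)) (nhds L))
    (hr_ll : ∀ t : ℝ, 0 < t → ∃ L : EReal, Tendsto r (nhdsWithin t (Iio t)) (nhds L))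
    (ψ φ₁ η₁ φ₂ η₂ : ℝ → ℝ)
    (hψ : Cadlag ψ) (hφ₁ : Cadlag φ₁) (hη₁ : Cadlag η₁)
    (hφ₂ : Cadlag φ₂) (hη₂ : Cadlag η₂)
    (h1 : SolvesESP l r ψ φ₁ η₁) (h2 : SolvesESP l r ψ φ₂ η₂) :
    ∀ t : ℝ, 0 ≤ t → φ₁ t = φ₂ t ∧ η₁ t = η₂ t := by
  intro t ht
  have hA := esp_aux l r ψ φ₁ η₁ φ₂ η₂ hη₁.2 hη₂.2 h1 h2 t ht
  have hB := esp_aux l r ψ φ₂ η₂ φ₁ η₁ hη₂.2 hη₁.2 h2 h1 t ht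
  have hη : η₁ t = η₂ t := by linarith
  have he1 := (h1.1 t ht).1
  have he2 := (h2.1 t ht).1
  exact ⟨by rw [he1, he2, hη], hη⟩
end

section
/- One-sided Skorokhod reflection below a moving boundary: given continuous functions ψ, r : [0,∞) → ℝ with ψ(0) ≤ r(0), the function φ(t) := ψ(t) - max(0, sup_{s ≤ t} (ψ(s) - r(s))) satisfies φ(t) ≤ r(t) for all t and φ(t) = ψ(t) + η(t) where η(t) = -max(0, sup_{s ≤ t}(ψ(s) - r(s))) is nonincreasing, η(0) = 0, and η decreases only when φ = r (i.e., η is constant on any interval where φ < r throughout). -/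
open Set

/-- Running maximum `max(0, sup_{0 ≤ s ≤ t} (ψ(s) - r(s)))`. -/
noncomputable def runMax (ψ r : ℝ → ℝ) (t : ℝ) : ℝ :=
  max 0 (sSup ((fun s => ψ s - r s) '' Icc 0 t))

/-- One-sided Skorokhod reflection of `ψ` below the moving barrier `r`:
`φ(t) = ψ(t) - max(0, sup_{s ≤ t}(ψ(s) - r(s)))`. -/
noncomputable def reflBelow (ψ r : ℝ → ℝ) (t : ℝ) : ℝ :=
  ψ t - runMax ψ r t

lemma runMax_bdd (ψ r : ℝ → ℝ) (hψ : Continuous ψ) (hr : Continuous r) (a b : ℝ) :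
    BddAbove ((fun s => ψ s - r s) '' Icc a b) :=
  (isCompact_Icc.image (hψ.sub hr)).bddAbove

lemma runMax_mono (ψ r : ℝ → ℝ) (hψ : Continuous ψ) (hr : Continuous r)
    {s t : ℝ} (hs : 0 ≤ s) (hst : s ≤ t) : runMax ψ r s ≤ runMax ψ r t := by
  apply max_le_max le_rfl
  apply csSup_le_csSup (runMax_bdd ψ r hψ hr 0 t)
  · exact ⟨_, ⟨0, ⟨le_rfl, hs⟩, rfl⟩⟩
  · exact image_mono (Icc_subset_Icc le_rfl hst)

/-- One-sided Skorokhod reflection below a moving boundary: `φ := reflBelow ψ r`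
stays at or below `r`, has the form `φ = ψ + η` with `η(t) = -max(0, sup_{s≤t}(ψ(s)-r(s)))`
nonincreasing, `η(0) = 0`, and `η` is constant on any interval on which `φ < r`
throughout. -/
theorem skorokhod_reflection_below (ψ r : ℝ → ℝ)
    (hψ : Continuous ψ) (hr : Continuous r) (h0 : ψ 0 ≤ r 0) :
    (∀ t : ℝ, 0 ≤ t → reflBelow ψ r t ≤ r t) ∧
    (∀ t : ℝ, 0 ≤ t → reflBelow ψ r t = ψ t + (-(runMax ψ r t))) ∧
    (∀ s t : ℝ, 0 ≤ s → s ≤ t → -(runMax ψ r t) ≤ -(runMax ψ r s)) ∧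
    (-(runMax ψ r 0) = 0) ∧
    (∀ s t : ℝ, 0 ≤ s → s ≤ t →
      (∀ u : ℝ, s ≤ u → u ≤ t → reflBelow ψ r u < r u) →
      runMax ψ r t = runMax ψ r s) := by
  refine ⟨?_, ?_, ?_, ?_, ?_⟩
  · intro t ht
    have h1 : ψ t - r t ≤ sSup ((fun s => ψ s - r s) '' Icc 0 t) :=
      le_csSup (runMax_bdd ψ r hψ hr 0 t) ⟨t, ⟨ht, le_rfl⟩, rfl⟩
    have : ψ t - r t ≤ runMax ψ r t := h1.trans (le_max_right _ _)
    simp only [reflBelow]; linarith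
  · intro t _; simp [reflBelow]; ring
  · intro s t hs hst
    exact neg_le_neg (runMax_mono ψ r hψ hr hs hst)
  · have : Icc (0:ℝ) 0 = {0} := Icc_self 0
    simp only [runMax, this, image_singleton, csSup_singleton]
    simp [max_eq_left (by linarith : ψ 0 - r 0 ≤ 0)]
  · intro s t hs hst hlt
    rcases eq_or_lt_of_le hst with rfl | hst'
    · rfl
    refine le_antisymm ?_ (runMax_mono ψ r hψ hr hs hst)
    -- split the interval
    have hunion : Icc (0:ℝ) t = Icc 0 s ∪ Icc s t := (Icc_union_Icc_eq_Icc hs hst).symm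
    set f : ℝ → ℝ := fun s => ψ s - r s with hf
    have hne1 : (f '' Icc 0 s).Nonempty := ⟨f 0, 0, ⟨le_rfl, hs⟩, rfl⟩
    have hne2 : (f '' Icc s t).Nonempty := ⟨f s, s, ⟨le_rfl, hst⟩, rfl⟩
    have hsup : sSup (f '' Icc 0 t) =
        max (sSup (f '' Icc 0 s)) (sSup (f '' Icc s t)) := by
      rw [hunion, image_union]
      exact csSup_union (runMax_bdd ψ r hψ hr 0 s) hne1 (runMax_bdd ψ r hψ hr s t) hne2
    -- sup over [s,t] attained
    obtain ⟨u, hu, humax⟩ := isCompact_Icc.exists_isMaxOn (Nonempty.of_image hne2)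
      ((hψ.sub hr).continuousOn)
    have hSeq : sSup (f '' Icc s t) = f u := by
      refine le_antisymm (csSup_le hne2 ?_) (le_csSup (runMax_bdd ψ r hψ hr s t) ⟨u, hu, rfl⟩)
      rintro x ⟨v, hv, rfl⟩; exact humax hv
    have hu0 : 0 ≤ u := hs.trans hu.1
    have hfu : f u < runMax ψ r u := by
      have := hlt u hu.1 hu.2
      simp only [reflBelow] at this
      simp only [hf]; linarith
    have hmono_u : runMax ψ r u ≤ runMax ψ r t := runMax_mono ψ r hψ hr hu0 hu.2
    have hS_lt : f u < runMax ψ r s := by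
      by_contra hcon
      push_neg at hcon
      have h0u : (0:ℝ) ≤ f u := le_trans (le_max_left _ _) hcon
      have h1 : runMax ψ r t ≤ f u := by
        simp only [runMax]
        rw [show sSup ((fun s => ψ s - r s) '' Icc 0 t) = max (sSup (f '' Icc 0 s)) (sSup (f '' Icc s t)) from hsup, hSeq]
        exact max_le h0u (max_le (le_trans (le_max_right 0 _) hcon) le_rfl)
      linarith [lt_of_lt_of_le hfu hmono_u]
    -- conclude
    have hS_le : sSup (f '' Icc s t) ≤ runMax ψ r s := hSeq ▸ hS_lt.le
    simp only [runMax]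
    rw [show sSup ((fun s => ψ s - r s) '' Icc 0 t) = max (sSup (f '' Icc 0 s)) (sSup (f '' Icc s t)) from hsup]
    exact max_le (le_max_left _ _) (max_le (le_max_right _ _) hS_le)
end

section
/- One-sided Skorokhod reflection above a moving boundary: given continuous functions ψ, l : [0,∞) → ℝ with ψ(0) ≥ l(0), the function φ(t) := ψ(t) + max(0, sup_{s ≤ t} (l(s) - ψ(s))) satisfies φ(t) ≥ l(t) for all t, φ - ψ is nondecreasing starting from 0, and φ - ψ is constant on any interval on which φ > l throughout. -/
open Set

/-- One-sided Skorokhod reflection of `ψ` above the moving barrier `l`: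
`φ(t) = ψ(t) + max(0, sup_{s ≤ t}(l(s) - ψ(s)))`. -/
noncomputable def reflAbove (ψ l : ℝ → ℝ) (t : ℝ) : ℝ :=
  ψ t + max 0 (sSup ((fun s => l s - ψ s) '' Icc 0 t))

/-- One-sided Skorokhod reflection above a moving boundary: `φ := reflAbove ψ l`
stays at or above `l`, the correction `φ - ψ` is nondecreasing starting from `0`,
and `φ - ψ` is constant on any interval on which `φ > l` throughout. -/
theorem skorokhod_reflection_above (ψ l : ℝ → ℝ)
    (hψ : Continuous ψ) (hl : Continuous l) (h0 : l 0 ≤ ψ 0) :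
    (∀ t : ℝ, 0 ≤ t → l t ≤ reflAbove ψ l t) ∧
    (reflAbove ψ l 0 - ψ 0 = 0) ∧
    (∀ s t : ℝ, 0 ≤ s → s ≤ t →
      reflAbove ψ l s - ψ s ≤ reflAbove ψ l t - ψ t) ∧
    (∀ s t : ℝ, 0 ≤ s → s ≤ t →
      (∀ u : ℝ, s ≤ u → u ≤ t → l u < reflAbove ψ l u) →
      reflAbove ψ l t - ψ t = reflAbove ψ l s - ψ s) := by
  set f : ℝ → ℝ := fun s => l s - ψ s with hf
  have hfc : Continuous f := hl.sub hψ
  set M : ℝ → ℝ := fun t => max 0 (sSup (f '' Icc 0 t)) with hM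
  have hMeq : ∀ t, reflAbove ψ l t - ψ t = M t := by
    intro t; simp [reflAbove, hM, hf]
  have hcomp : ∀ t : ℝ, IsCompact (f '' Icc 0 t) := fun t =>
    (isCompact_Icc).image hfc
  have hbdd : ∀ t : ℝ, BddAbove (f '' Icc 0 t) := fun t => (hcomp t).bddAbove
  -- monotonicity
  have hmono : ∀ s t : ℝ, 0 ≤ s → s ≤ t → M s ≤ M t := by
    intro s t hs hst
    apply max_le_max le_rfl
    apply csSup_le_csSup (hbdd t)
    · exact (Set.nonempty_Icc.mpr hs).image f
    · exact image_mono (f := f) (Icc_subset_Icc le_rfl hst)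
  have hle : ∀ t : ℝ, 0 ≤ t → f t ≤ M t := by
    intro t ht
    refine le_trans ?_ (le_max_right _ _)
    exact le_csSup (hbdd t) ⟨t, ⟨ht, le_rfl⟩, rfl⟩
  refine ⟨?_, ?_, ?_, ?_⟩
  · intro t ht
    have := hle t ht
    have := hMeq t
    simp only [hf] at *
    linarith
  · rw [hMeq]
    simp only [hM, Icc_self, image_singleton, csSup_singleton]
    simp only [hf]
    have : l 0 - ψ 0 ≤ 0 := by linarith
    exact max_eq_left this
  · intro s t hs hst
    rw [hMeq, hMeq]; exact hmono s t hs hst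
  · intro s t hs hst hlt
    rw [hMeq, hMeq]
    by_contra hne
    have hlt' : M s < M t := lt_of_le_of_ne (hmono s t hs hst) (Ne.symm hne)
    have hMt0 : 0 < M t := lt_of_le_of_lt (le_max_left _ _) hlt'
    have hMt : M t = sSup (f '' Icc 0 t) := by
      rcases max_cases 0 (sSup (f '' Icc 0 t)) with ⟨h1, _⟩ | ⟨h1, _⟩
      · exfalso; rw [hM] at hMt0; simp only at hMt0; rw [h1] at hMt0; exact lt_irrefl _ hMt0
      · exact h1
    have hne' : (f '' Icc 0 t).Nonempty := (Set.nonempty_Icc.mpr (hs.trans hst)).image f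
    obtain ⟨u, hu, hfu⟩ := (hcomp t).sSup_mem hne'
    rw [← hMt] at hfu
    by_cases hus : u ≤ s
    · have : f u ≤ M s := le_trans (le_csSup (hbdd s) ⟨u, ⟨hu.1, hus⟩, rfl⟩) (le_max_right _ _)
      rw [hfu] at this; exact absurd this (not_le_of_gt hlt')
    · push_neg at hus
      have hsu : s ≤ u := le_of_lt hus
      have h1 : l u < reflAbove ψ l u := hlt u hsu hu.2
      have h2 : reflAbove ψ l u - ψ u = M u := hMeq u
      have h3 : f u < M u := by simp only [hf]; linarith
      have h4 : M u ≤ M t := hmono u t (hs.trans hsu) hu.2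
      rw [hfu] at h3; exact absurd h4 (not_le_of_gt h3)
end

section
/- The sequential update of the interlacing dynamics preserves the state space: if x ∈ GT^(N) and the updated configuration x' is obtained from x by applying the block/push update rules with increments δ_i^j ∈ {-1, 0, 1} (a particle attempting to jump right is blocked if its upper-left neighbor on level below sits at x_i^{k-1} = x_i^k + 1 after update; attempting to jump left is blocked if x_{i-1}^{k-1} = x_i^k after update; a particle at x_i^k = x_{i-1}^{k-1}(new) - 1 is pushed right; a particle at x_i^k = x_i^{k-1}(new) is pushed left), then x' ∈ GT^(N). -/
/-- `x` is an integer Gelfand–Tsetlin pattern of size `N`. -/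
def IsGT (N : ℕ) (x : ℕ → ℕ → ℤ) : Prop :=
  ∀ i j : ℕ, 2 ≤ i → i ≤ j → j ≤ N →
    x (i - 1) j < x (i - 1) (j - 1) ∧ x (i - 1) (j - 1) ≤ x i j

/-- The sequential block/push update of the interlacing dynamics preserves the state
space `GT^(N)`: the configuration `x'`, obtained from `x ∈ GT^(N)` by applying, level
by level, first the pushing rules (a particle at `x_i^k = x'_{i-1}^{k-1} - 1` is pushed
right, a particle at `x_i^k = x'_i^{k-1}` is pushed left) and then its own increment
`δ_i^k ∈ {-1,0,1}` subject to blocking (a right jump is blocked if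
`x'_i^{k-1} = x_i^k + 1`, a left jump is blocked if `x'_{i-1}^{k-1} = x_i^k`),
again belongs to `GT^(N)`. -/
theorem update_preserves_GT (N : ℕ) (x x' : ℕ → ℕ → ℤ) (δ : ℕ → ℕ → ℤ)
    (hx : IsGT N x)
    (hδ : ∀ i k : ℕ, δ i k = -1 ∨ δ i k = 0 ∨ δ i k = 1)
    (hupd : ∀ i k : ℕ, 1 ≤ i → i ≤ k → k ≤ N →
      x' i k =
        if 1 < i ∧ x i k = x' (i - 1) (k - 1) - 1 then x i k + 1
        else if i < k ∧ x i k = x' i (k - 1) then x i k - 1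
        else if δ i k = 1 then
          (if i < k ∧ x' i (k - 1) = x i k + 1 then x i k else x i k + 1)
        else if δ i k = -1 then
          (if 1 < i ∧ x' (i - 1) (k - 1) = x i k then x i k else x i k - 1)
        else x i k) :
    IsGT N x' := by
  have hrange : ∀ i k : ℕ, 1 ≤ i → i ≤ k → k ≤ N →
      x i k - 1 ≤ x' i k ∧ x' i k ≤ x i k + 1 := by
    intro i k h1 h2 h3
    rw [hupd i k h1 h2 h3]
    have := hδ i k
    split_ifs <;> omega
  suffices H : ∀ j, ∀ i : ℕ, 2 ≤ i → i ≤ j → j ≤ N →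
      x' (i - 1) j < x' (i - 1) (j - 1) ∧ x' (i - 1) (j - 1) ≤ x' i j by
    intro i j h2 hij hjN; exact H j i h2 hij hjN
  intro j
  induction j using Nat.strong_induction_on with
  | _ j IH =>
    intro i h2 hij hjN
    have ha' := hupd (i - 1) j (by omega) (by omega) hjN
    have hc' := hupd i j (by omega) hij hjN
    have hb := hrange (i - 1) (j - 1) (by omega) (by omega) (by omega)
    have hxf := hx i j h2 hij hjN
    have hp : i ≤ 2 ∨ x' (i - 1 - 1) (j - 1) < x' (i - 1) (j - 1) := by
      rcases le_or_gt i 2 with h | h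
      · exact Or.inl h
      · have := IH (j - 1) (by omega) (i - 1) (by omega) (by omega) (by omega)
        right; omega
    have hq : j ≤ i ∨ x' (i - 1) (j - 1) < x' i (j - 1) := by
      rcases le_or_gt j i with h | h
      · exact Or.inl h
      · have := IH (j - 1) (by omega) i h2 (by omega) (by omega)
        right; omega
    have hd1 := hδ (i - 1) j
    have hd2 := hδ i j
    rw [ha', hc']
    constructor <;> split_ifs <;> omega
end
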